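/- The bound ⌈k/l⌉/k is tight for the CC-guarantee of Limited Voting on broadcasted party-list elections: for every committee size k, every ballot limit l with 1 ≤ l ≤ k, and every real ε > 0, there exist a broadcasted party-list election E with committee size k and ballot limit l and a winning committee W ∈ LV(E) such that s_CC(A, W) < (⌈k/l⌉/k + ε) · max_{W' ⊆ C, |W'| = k} s_CC(A, W'). -/

import Mathlib

open Finset

/-- An election `E = (N, C, k, l, A, L)`: voters form the finite type `V`,
candidates the finite type `C`, `k` is the committee size, `l` the ballot limit,
`A i` is the approval set of voter `i` and `L i` their ballot. -/
structure Election (V C : Type*) [Fintype V] [DecidableEq V] [Fintype C] [DecidableEq C] where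
  k : ℕ
  l : ℕ
  A : V → Finset C
  L : V → Finset C
  k_le_card : k ≤ Fintype.card C
  one_le_l : 1 ≤ l
  l_le_k : l ≤ k
  ballot_card : ∀ i, (L i).card = l
  ballot_sub_approval : ∀ i, l ≤ (A i).card → L i ⊆ A i
  approval_ssub_ballot : ∀ i, (A i).card < l → A i ⊂ L i

variable {V C : Type*} [Fintype V] [DecidableEq V] [Fintype C] [DecidableEq C]

/-- The LV-score of a candidate: the number of voters whose ballot contains it. -/
def sLVc (E : Election V C) (c : C) : ℕ := (univ.filter fun i => c ∈ E.L i).card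

/-- The AV-score of a candidate: the number of voters approving it. -/
def sAVc (E : Election V C) (c : C) : ℕ := (univ.filter fun i => c ∈ E.A i).card

/-- The LV-score of a committee. -/
def sLV (E : Election V C) (W : Finset C) : ℕ := ∑ c ∈ W, sLVc E c

/-- The AV-score of a committee. -/
def sAV (E : Election V C) (W : Finset C) : ℕ := ∑ c ∈ W, sAVc E c

/-- The winning committees of Limited Voting: size-`k` committees maximizing the LV-score. -/
def LVwin (E : Election V C) : Set (Finset C) :=
  {W | W.card = E.k ∧ ∀ W' : Finset C, W'.card = E.k → sLV E W' ≤ sLV E W}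

/-- The winning committees of Approval Voting: size-`k` committees maximizing the AV-score. -/
def AVwin (E : Election V C) : Set (Finset C) :=
  {W | W.card = E.k ∧ ∀ W' : Finset C, W'.card = E.k → sAV E W' ≤ sAV E W}

/-- The Chamberlin–Courant score of a committee: the number of represented voters. -/
def sCC (E : Election V C) (W : Finset C) : ℕ :=
  (univ.filter fun i => (W ∩ E.A i).Nonempty).card

/-- `A` is a party-list profile: approval sets are nonempty and pairwise equal or disjoint. -/
def PartyList (E : Election V C) : Prop :=
  (∀ i, (E.A i).Nonempty) ∧ ∀ i j : V, E.A i = E.A j ∨ E.A i ∩ E.A j = ∅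

/-- `E` is consistent with some broadcasting (linear) order on candidates, encoded by an
injective priority function `f` (`f c < f c'` meaning `c ≻ c'`). -/
def Broadcasted (E : Election V C) : Prop :=
  ∃ f : C → ℕ, Function.Injective f ∧
    ∀ (i : V) (c c' : C), c ∈ E.A i → c' ∈ E.A i → c ∈ E.L i → c' ∉ E.L i → f c < f c'

/-- The number of voters of party `Pj`. -/
def nParty (E : Election V C) (Pj : Finset C) : ℕ := (univ.filter fun i => E.A i = Pj).card
lemma card_filter_val_lt (n m : ℕ) (h : m ≤ n) :
    ((univ : Finset (Fin n)).filter (fun i : Fin n => (i : ℕ) < m)).card = m := by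
  have : ((univ : Finset (Fin n)).filter (fun i : Fin n => (i : ℕ) < m)) =
      Finset.map (Fin.castLEEmb h) univ := by
    ext c
    simp only [mem_filter, mem_univ, true_and, mem_map, Fin.castLEEmb]
    constructor
    · intro hc; exact ⟨⟨c, hc⟩, by simp [Fin.castLE, Fin.ext_iff]⟩
    · rintro ⟨b, rfl⟩; simp [b.isLt]
  simp [this]

/-- The bound `⌈k/l⌉/k` is tight for the CC-guarantee of LV on broadcasted
party-list elections: for all `k`, `l` with `1 ≤ l ≤ k` and every `ε > 0`, there are a
broadcasted party-list election with committee size `k` and ballot limit `l` and an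
LV-winning committee `W` with
`s_CC(A, W) < (⌈k/l⌉/k + ε) · max_{|W'| = k} s_CC(A, W')`. -/
theorem stmt7 :
    ∀ k l : ℕ, 1 ≤ l → l ≤ k → ∀ ε : ℝ, 0 < ε →
      ∃ (nV nC : ℕ) (E : Election (Fin nV) (Fin nC)),
        E.k = k ∧ E.l = l ∧ PartyList E ∧ Broadcasted E ∧
        ∃ W ∈ LVwin E, ∃ Wmax : Finset (Fin nC), Wmax.card = E.k ∧
          (∀ W' : Finset (Fin nC), W'.card = E.k → sCC E W' ≤ sCC E Wmax) ∧
          (sCC E W : ℝ) < ((((k + l - 1) / l : ℕ) : ℝ) / (k : ℝ) + ε) * (sCC E Wmax : ℝ) := by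
  intro k l hl hlk ε hε
  have hk : 1 ≤ k := le_trans hl hlk
  have hl0 : 0 < l := hl
  have hk0 : 0 < k := hk
  set m : ℕ := (k + l - 1) / l with hm
  have hm_eq : m = (k - 1) / l + 1 := by
    rw [hm]
    have h2 : k + l - 1 = (k - 1) + l := by omega
    rw [h2, Nat.add_div_right _ hl0]
  have hmk : m ≤ k := by
    rw [hm_eq]
    exact Nat.succ_le_of_lt (Nat.lt_of_le_of_lt (Nat.div_le_self _ _) (Nat.sub_lt hk0 one_pos))
  -- key equivalence: i * l < k ↔ i < m
  have hkey : ∀ i : ℕ, i * l < k ↔ i < m := by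
    intro i
    rw [hm_eq]
    constructor
    · intro h
      exact Nat.lt_succ_of_le ((Nat.le_div_iff_mul_le hl0).mpr (Nat.le_sub_one_of_lt h))
    · intro h
      exact Nat.lt_of_le_of_lt ((Nat.le_div_iff_mul_le hl0).mp (Nat.lt_succ_iff.mp h))
        (Nat.sub_lt hk0 one_pos)
  have hkkl : k ≤ k * l := Nat.le_mul_of_pos_right _ hl0
  -- approval sets: party of voter i consists of candidates c with c / l = i
  set Ap : Fin k → Finset (Fin (k * l)) :=
    fun i => (univ : Finset (Fin (k * l))).filter (fun c => (c : ℕ) / l = (i : ℕ)) with hAp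
  have hApMem : ∀ (i : Fin k) (c : Fin (k * l)), c ∈ Ap i ↔ (c : ℕ) / l = (i : ℕ) := by
    intro i c; simp [hAp]
  have hmem_il : ∀ i : Fin k, (i : ℕ) * l < k * l := fun i =>
    (Nat.mul_lt_mul_right hl0).mpr i.isLt
  have hcanon : ∀ i : Fin k, (⟨(i : ℕ) * l, hmem_il i⟩ : Fin (k * l)) ∈ Ap i := by
    intro i
    rw [hApMem]
    exact Nat.mul_div_cancel (i : ℕ) hl0
  have hApcard : ∀ i : Fin k, (Ap i).card = l := by
    intro i
    have hmapeq : Ap i = Finset.map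
        ⟨fun j : Fin l => (⟨(i : ℕ) * l + (j : ℕ), by
            have h1 := i.isLt; have h2 := j.isLt
            calc (i : ℕ) * l + (j : ℕ) < (i : ℕ) * l + l := by omega
              _ = ((i : ℕ) + 1) * l := by ring
              _ ≤ k * l := Nat.mul_le_mul_right _ (by omega)⟩ : Fin (k * l)),
          by intro a b hab; simpa [Fin.ext_iff] using hab⟩ univ := by
      ext c
      simp only [hApMem, mem_map, mem_univ, true_and, Function.Embedding.coeFn_mk, Fin.ext_iff]
      constructor
      · intro hc
        refine ⟨⟨(c : ℕ) % l, Nat.mod_lt _ hl0⟩, ?_⟩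
        show (i : ℕ) * l + (c : ℕ) % l = (c : ℕ)
        rw [← hc, mul_comm]
        exact Nat.div_add_mod _ _
      · rintro ⟨j, hj⟩
        rw [← hj]
        show ((i : ℕ) * l + (j : ℕ)) / l = (i : ℕ)
        rw [add_comm, mul_comm, Nat.add_mul_div_left _ _ hl0,
          Nat.div_eq_of_lt j.isLt, zero_add]
    rw [hmapeq, card_map, card_univ, Fintype.card_fin]
  -- the election
  refine ⟨k, k * l, ⟨k, l, Ap, Ap, by simpa using hkkl, hl, hlk, hApcard,
    fun i _ => subset_rfl, fun i h => absurd h (by rw [hApcard i]; exact lt_irrefl l)⟩,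
    rfl, rfl, ?_, ?_, ?_⟩
  · -- PartyList
    refine ⟨fun i => ⟨_, hcanon i⟩, fun i j => ?_⟩
    by_cases hij : i = j
    · exact Or.inl (by rw [hij])
    · refine Or.inr (eq_empty_of_forall_notMem fun c hc => hij ?_)
      have h1 := (hApMem i c).mp (mem_of_mem_inter_left hc)
      have h2 := (hApMem j c).mp (mem_of_mem_inter_right hc)
      exact Fin.ext (h1 ▸ h2)
  · -- Broadcasted
    exact ⟨Fin.val, Fin.val_injective, fun i c c' _ hc' _ hc'L => absurd hc' hc'L⟩
  · -- winning committee and max committee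
    have hsLVc : ∀ c : Fin (k * l), sLVc (V := Fin k) ⟨k, l, Ap, Ap, by simpa using hkkl, hl,
        hlk, hApcard, fun i _ => subset_rfl,
        fun i h => absurd h (by rw [hApcard i]; exact lt_irrefl l)⟩ c = 1 := by
      intro c
      have hdiv : (c : ℕ) / l < k := (Nat.div_lt_iff_lt_mul hl0).mpr c.isLt
      have : (univ.filter fun i : Fin k => c ∈ Ap i) = {⟨(c : ℕ) / l, hdiv⟩} := by
        ext i
        simp only [mem_filter, mem_univ, true_and, mem_singleton, hApMem, Fin.ext_iff]
        exact ⟨fun h => h.symm, fun h => h.symm⟩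
      simp only [sLVc, this, card_singleton]
    set E : Election (Fin k) (Fin (k * l)) := ⟨k, l, Ap, Ap, by simpa using hkkl, hl, hlk,
      hApcard, fun i _ => subset_rfl,
      fun i h => absurd h (by rw [hApcard i]; exact lt_irrefl l)⟩ with hE
    have hsLV : ∀ W' : Finset (Fin (k * l)), sLV E W' = W'.card := by
      intro W'
      simp only [sLV]
      rw [Finset.sum_congr rfl fun c _ => hsLVc c, Finset.sum_const, smul_eq_mul, mul_one]
    -- W : the first k candidates
    set W : Finset (Fin (k * l)) := univ.filter (fun c : Fin (k * l) => (c : ℕ) < k) with hW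
    have hWcard : W.card = k := card_filter_val_lt _ _ hkkl
    -- Wmax : one candidate per party
    set Wmax : Finset (Fin (k * l)) := univ.map
      ⟨fun i : Fin k => (⟨(i : ℕ) * l, hmem_il i⟩ : Fin (k * l)),
        fun a b hab => Fin.ext (Nat.eq_of_mul_eq_mul_right hl0 (by
          simpa [Fin.ext_iff] using hab))⟩ with hWmax
    have hWmaxcard : Wmax.card = k := by rw [hWmax, card_map, card_univ, Fintype.card_fin]
    refine ⟨W, ⟨hWcard, fun W' hW' => by rw [hsLV, hsLV, hW', hWcard]⟩, Wmax, hWmaxcard, ?_, ?_⟩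
    · -- Wmax maximizes sCC
      intro W' _
      have hmax : sCC E Wmax = k := by
        have huniv : (univ.filter fun i : Fin k => (Wmax ∩ E.A i).Nonempty) = univ := by
          refine filter_true_of_mem fun i _ => ⟨⟨(i : ℕ) * l, hmem_il i⟩, ?_⟩
          refine mem_inter.mpr ⟨?_, hcanon i⟩
          rw [hWmax]
          simp only [mem_map, mem_univ, true_and, Function.Embedding.coeFn_mk]
          exact ⟨i, rfl⟩
        simp only [sCC, huniv, card_univ, Fintype.card_fin]
      rw [hmax]
      calc sCC E W' ≤ (univ : Finset (Fin k)).card := card_filter_le _ _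
        _ = k := by rw [card_univ, Fintype.card_fin]
    · -- the numeric inequality
      have hWcc : sCC E W = m := by
        have hfe : (univ.filter fun i : Fin k => (W ∩ E.A i).Nonempty)
            = univ.filter (fun i : Fin k => (i : ℕ) < m) := by
          refine filter_congr fun i _ => ?_
          constructor
          · rintro ⟨c, hc⟩
            have hcW : (c : ℕ) < k := by
              have := mem_of_mem_inter_left hc
              rw [hW] at this
              simpa using this
            have hcA : (c : ℕ) / l = (i : ℕ) := (hApMem i c).mp (mem_of_mem_inter_right hc)
            have hle : (i : ℕ) * l ≤ (c : ℕ) := by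
              rw [← hcA]; exact Nat.div_mul_le_self _ _
            exact (hkey _).mp (lt_of_le_of_lt hle hcW)
          · intro him
            refine ⟨⟨(i : ℕ) * l, hmem_il i⟩, mem_inter.mpr ⟨?_, hcanon i⟩⟩
            rw [hW]
            simpa using (hkey _).mpr him
        simp only [sCC, hfe]
        exact card_filter_val_lt _ _ hmk
      have hmaxcc : sCC E Wmax = k := by
        have huniv : (univ.filter fun i : Fin k => (Wmax ∩ E.A i).Nonempty) = univ := by
          refine filter_true_of_mem fun i _ => ⟨⟨(i : ℕ) * l, hmem_il i⟩, ?_⟩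
          refine mem_inter.mpr ⟨?_, hcanon i⟩
          rw [hWmax]
          simp only [mem_map, mem_univ, true_and, Function.Embedding.coeFn_mk]
          exact ⟨i, rfl⟩
        simp only [sCC, huniv, card_univ, Fintype.card_fin]
      rw [hWcc, hmaxcc]
      have hkR : (0 : ℝ) < (k : ℝ) := by exact_mod_cast hk0
      have heq : (((m : ℕ) : ℝ) / (k : ℝ) + ε) * (k : ℝ) = (m : ℝ) + ε * k := by
        field_simp
      rw [heq]
      nlinarith [mul_pos hε hkR]
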